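/- Fix m > 0 and let ω(x) = √(m x φ(x/m)). Let T > 0, K ≥ 0, and let y : [0,T] → [0,∞) be continuous and satisfy y(t) ≤ K ∫₀^t s^{−1/2} ω(y(s)) ds for all t ∈ [0,T]. Then y(t) = 0 for every t ∈ [0,T]. -/

import Mathlib

open Real Set MeasureTheory
open scoped ENNReal

noncomputable section

/-- The concave modulus `φ` from the paper: `φ(x) = x (log x)²` for
`x ≤ e^{-1-√2}` (with `φ(0) = 0`, using `log 0 = 0`), and
`φ(x) = x + 2(1+√2)e^{-1-√2}` beyond the junction point. -/
def phi (x : ℝ) : ℝ :=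
  if x ≤ Real.exp (-1 - Real.sqrt 2) then x * Real.log x ^ 2
  else x + 2 * (1 + Real.sqrt 2) * Real.exp (-1 - Real.sqrt 2)

/-- The modulus `ω(x) = √(m x φ(x/m))` associated with mass `m`. -/
def omega (m x : ℝ) : ℝ := Real.sqrt (m * x * phi (x / m))

lemma one_lt_sqrt_two : (1:ℝ) < Real.sqrt 2 := by
  nlinarith [Real.sq_sqrt (by norm_num : (0:ℝ) ≤ 2), Real.sqrt_nonneg 2]

lemma xlog_mono {a b : ℝ} (ha : 0 < a) (hab : a ≤ b) (hb : b ≤ Real.exp (-1 - Real.sqrt 2)) :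
    a * Real.log a ^ 2 ≤ b * Real.log b ^ 2 := by
  rcases eq_or_lt_of_le hab with rfl | hlt
  · exact le_rfl
  have hsub : Icc a b ⊆ {(0:ℝ)}ᶜ := by
    intro x hx
    simp only [mem_compl_iff, mem_singleton_iff]
    exact (lt_of_lt_of_le ha hx.1).ne'
  have hmono : StrictMonoOn (fun x => x * Real.log x ^ 2) (Icc a b) := by
    apply strictMonoOn_of_deriv_pos (convex_Icc a b)
    · exact continuousOn_id.mul ((Real.continuousOn_log.mono hsub).pow 2)
    · intro x hx
      rw [interior_Icc] at hx
      have hx0 : 0 < x := lt_trans ha hx.1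
      have hd : HasDerivAt (fun x => x * Real.log x ^ 2)
          (1 * Real.log x ^ 2 + x * (2 * Real.log x ^ 1 * x⁻¹)) x :=
        (hasDerivAt_id x).mul ((Real.hasDerivAt_log hx0.ne').pow 2)
      rw [hd.deriv]
      have hlog : Real.log x < -1 - Real.sqrt 2 := by
        have h1 : Real.log x < Real.log (Real.exp (-1 - Real.sqrt 2)) :=
          Real.log_lt_log hx0 (lt_of_lt_of_le hx.2 hb)
        rwa [Real.log_exp] at h1
      have h2 : Real.log x < -2 := by nlinarith [_root_.one_lt_sqrt_two]
      have he : 1 * Real.log x ^ 2 + x * (2 * Real.log x ^ 1 * x⁻¹)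
          = Real.log x ^ 2 + 2 * Real.log x := by
        field_simp
      rw [he]
      nlinarith
  exact (hmono ⟨le_rfl, hab⟩ ⟨hab, le_rfl⟩ hlt).le

lemma phi_nonneg {x : ℝ} (hx : 0 ≤ x) : 0 ≤ phi x := by
  unfold phi
  split
  · positivity
  · have := Real.exp_pos (-1 - Real.sqrt 2)
    nlinarith [Real.sqrt_nonneg 2]

lemma phi_mono {a b : ℝ} (h0 : 0 ≤ a) (hab : a ≤ b) : phi a ≤ phi b := by
  have hc : (0:ℝ) < Real.exp (-1 - Real.sqrt 2) := Real.exp_pos _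
  have hkey : ∀ z : ℝ, 0 ≤ z → z ≤ Real.exp (-1 - Real.sqrt 2) →
      z * Real.log z ^ 2 ≤ Real.exp (-1 - Real.sqrt 2) * Real.log (Real.exp (-1 - Real.sqrt 2)) ^ 2 := by
    intro z hz hzc
    rcases eq_or_lt_of_le hz with rfl | hz'
    · simp
      positivity
    · exact xlog_mono hz' hzc le_rfl
  have hval : Real.exp (-1 - Real.sqrt 2) * Real.log (Real.exp (-1 - Real.sqrt 2)) ^ 2
      = Real.exp (-1 - Real.sqrt 2) + 2 * (1 + Real.sqrt 2) * Real.exp (-1 - Real.sqrt 2) := by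
    rw [Real.log_exp]
    nlinarith [Real.sq_sqrt (by norm_num : (0:ℝ) ≤ 2)]
  unfold phi
  split <;> split
  all_goals rename_i h1 h2
  · -- both ≤ c
    rcases eq_or_lt_of_le h0 with rfl | ha'
    · simp
      positivity
    · exact xlog_mono ha' hab h2
  · -- a ≤ c < b
    push_neg at h2
    calc a * Real.log a ^ 2 ≤ _ := hkey a h0 h1
    _ = Real.exp (-1 - Real.sqrt 2) + 2 * (1 + Real.sqrt 2) * Real.exp (-1 - Real.sqrt 2) := hval
    _ ≤ b + 2 * (1 + Real.sqrt 2) * Real.exp (-1 - Real.sqrt 2) := by linarith [h2.le]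
  · -- c < a ≤ b ≤ c : impossible
    exact absurd (hab.trans h2) h1
  · linarith

lemma omega_nonneg (m x : ℝ) : 0 ≤ omega m x := Real.sqrt_nonneg _

lemma omega_mono {m a b : ℝ} (hm : 0 < m) (h0 : 0 ≤ a) (hab : a ≤ b) :
    omega m a ≤ omega m b := by
  apply Real.sqrt_le_sqrt
  have h1 : phi (a / m) ≤ phi (b / m) :=
    phi_mono (by positivity) (by apply div_le_div_of_nonneg_right hab hm.le)
  have h2 : (0:ℝ) ≤ phi (a / m) := phi_nonneg (by positivity)
  have h3 : m * a ≤ m * b := by nlinarith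
  exact mul_le_mul h3 h1 h2 (by nlinarith)

lemma omega_exp {m v : ℝ} (hm : 0 < m) (hv : 1 + Real.sqrt 2 ≤ v) :
    omega m (m * Real.exp (-v)) = m * Real.exp (-v) * v := by
  have harg : m * Real.exp (-v) / m = Real.exp (-v) := by field_simp
  have hbr : Real.exp (-v) ≤ Real.exp (-1 - Real.sqrt 2) := by
    apply Real.exp_le_exp.2
    linarith
  have hv0 : 0 ≤ v := by nlinarith [Real.sqrt_nonneg 2]
  unfold omega phi
  rw [harg, if_pos hbr, Real.log_exp]
  have hsq : m * (m * Real.exp (-v)) * (Real.exp (-v) * (-v) ^ 2)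
      = (m * Real.exp (-v) * v) ^ 2 := by ring
  rw [hsq, Real.sqrt_sq (by positivity)]

lemma phi_measurable : Measurable phi := by
  unfold phi
  exact Measurable.ite (measurableSet_le measurable_id measurable_const)
    (measurable_id.mul (Real.measurable_log.pow_const 2))
    (measurable_id.add_const _)

lemma omega_measurable (m : ℝ) : Measurable (omega m) := by
  unfold omega
  exact Real.continuous_sqrt.measurable.comp
    ((measurable_const.mul measurable_id).mul
      (phi_measurable.comp (measurable_id.div_const m)))

lemma sqrtinv_integrableOn {t : ℝ} (ht : 0 ≤ t) :
    IntegrableOn (fun s => (Real.sqrt s)⁻¹) (Ioc 0 t) := by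
  have h : IntervalIntegrable (fun s : ℝ => s ^ (-(1/2) : ℝ)) volume 0 t :=
    intervalIntegral.intervalIntegrable_rpow' (by norm_num)
  have h2 : IntegrableOn (fun s : ℝ => s ^ (-(1/2) : ℝ)) (Ioc 0 t) :=
    (intervalIntegrable_iff_integrableOn_Ioc_of_le ht).1 h
  apply h2.congr_fun ?_ measurableSet_Ioc
  intro s hs
  show s ^ (-(1/2) : ℝ) = (Real.sqrt s)⁻¹
  rw [Real.sqrt_eq_rpow, ← Real.rpow_neg hs.1.le]

lemma sqrtinv_intervalIntegrable {t : ℝ} (ht : 0 ≤ t) :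
    IntervalIntegrable (fun s => (Real.sqrt s)⁻¹) volume 0 t :=
  (intervalIntegrable_iff_integrableOn_Ioc_of_le ht).2 (sqrtinv_integrableOn ht)
/-- Osgood uniqueness lemma with the singular weight
`s^{-1/2}`. If a continuous nonnegative function `y` on `[0,T]` satisfies
`y(t) ≤ K ∫₀ᵗ s^{-1/2} ω(y(s)) ds`, then `y ≡ 0`. -/
theorem osgood_vanishing_weighted (m : ℝ) (hm : 0 < m) (T K : ℝ) (hT : 0 < T)
    (hK : 0 ≤ K) (y : ℝ → ℝ)
    (hc : ContinuousOn y (Set.Icc 0 T))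
    (hnn : ∀ t ∈ Set.Icc 0 T, 0 ≤ y t)
    (hineq : ∀ t ∈ Set.Icc 0 T,
      y t ≤ K * ∫ s in (0:ℝ)..t, (Real.sqrt s)⁻¹ * omega m (y s)) :
    ∀ t ∈ Set.Icc 0 T, y t = 0 := by
  intro t ht
  refine le_antisymm ?_ (hnn t ht)
  set c₁ : ℝ := Real.exp (-(2 * K * Real.sqrt T)) with hc₁
  have hc₁0 : 0 < c₁ := Real.exp_pos _
  -- y bound
  obtain ⟨Y, hY⟩ : ∃ Y, ∀ s ∈ Icc (0:ℝ) T, y s ≤ Y := by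
    obtain ⟨Y, hY⟩ := isCompact_Icc.bddAbove_image hc
    exact ⟨Y, fun s hs => hY (mem_image_of_mem y hs)⟩
  have hy00 : y 0 ≤ 0 := by
    have h := hineq 0 ⟨le_rfl, hT.le⟩
    simpa using h
  have key : ∀ v : ℝ, (1 + Real.sqrt 2) * Real.exp (2 * K * Real.sqrt T) ≤ v →
      y t ≤ m * Real.exp (-(v * c₁)) := by
    intro v hv
    have hv0 : 0 < v := lt_of_lt_of_le (by positivity) hv
    set u : ℝ → ℝ := fun s => m * Real.exp (-(v * Real.exp (-(2 * K * Real.sqrt s)))) with hu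
    have hu_cont : Continuous u := by fun_prop
    have hu_pos : ∀ s, 0 < u s := fun s => by positivity
    have hu_le : ∀ s, u s ≤ m := by
      intro s
      have h1 : Real.exp (-(v * Real.exp (-(2 * K * Real.sqrt s)))) ≤ 1 := by
        apply Real.exp_le_one_iff.2
        have : (0:ℝ) ≤ v * Real.exp (-(2 * K * Real.sqrt s)) := by positivity
        linarith
      calc u s = m * Real.exp (-(v * Real.exp (-(2 * K * Real.sqrt s)))) := rfl
        _ ≤ m * 1 := by nlinarith
        _ = m := mul_one m
    have hvs : ∀ s ∈ Icc (0:ℝ) T, 1 + Real.sqrt 2 ≤ v * Real.exp (-(2 * K * Real.sqrt s)) := by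
      intro s hs
      have hsq : Real.sqrt s ≤ Real.sqrt T := Real.sqrt_le_sqrt hs.2
      have h1 : Real.exp (-(2 * K * Real.sqrt T)) ≤ Real.exp (-(2 * K * Real.sqrt s)) := by
        apply Real.exp_le_exp.2
        nlinarith
      calc 1 + Real.sqrt 2
          = ((1 + Real.sqrt 2) * Real.exp (2 * K * Real.sqrt T)) *
              Real.exp (-(2 * K * Real.sqrt T)) := by
            rw [mul_assoc, ← Real.exp_add]
            simp
        _ ≤ v * Real.exp (-(2 * K * Real.sqrt s)) :=
            mul_le_mul hv h1 (Real.exp_pos _).le hv0.le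
    have homega_u : ∀ s ∈ Icc (0:ℝ) T,
        omega m (u s) = u s * (v * Real.exp (-(2 * K * Real.sqrt s))) := by
      intro s hs
      exact omega_exp hm (hvs s hs)
    have hu_deriv : ∀ s ∈ Ioo (0:ℝ) T,
        HasDerivAt u (K * ((Real.sqrt s)⁻¹ * omega m (u s))) s := by
      intro s hs
      have hs0 : 0 < s := hs.1
      have hsq : 0 < Real.sqrt s := Real.sqrt_pos.2 hs0
      have h1 : HasDerivAt (fun x : ℝ => 2 * K * Real.sqrt x)
          (2 * K * (1 / (2 * Real.sqrt s))) s :=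
        (Real.hasDerivAt_sqrt hs0.ne').const_mul (2 * K)
      have h2 : HasDerivAt (fun x : ℝ => Real.exp (-(2 * K * Real.sqrt x)))
          (Real.exp (-(2 * K * Real.sqrt s)) * -(2 * K * (1 / (2 * Real.sqrt s)))) s :=
        h1.neg.exp
      have h3 : HasDerivAt u
          (m * (Real.exp (-(v * Real.exp (-(2 * K * Real.sqrt s)))) *
            -(v * (Real.exp (-(2 * K * Real.sqrt s)) * -(2 * K * (1 / (2 * Real.sqrt s))))))) s :=
        ((h2.const_mul v).neg.exp).const_mul m
      convert h3 using 1
      rw [homega_u s (Ioo_subset_Icc_self hs)]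
      simp only [hu]
      field_simp
    have hInt_u0 : ∀ t' ∈ Icc (0:ℝ) T,
        IntervalIntegrable (fun s => (Real.sqrt s)⁻¹ * omega m (u s)) volume 0 t' := by
      intro t' ht'
      rw [intervalIntegrable_iff_integrableOn_Ioc_of_le ht'.1]
      have hg : IntegrableOn (fun s => m * v * (Real.sqrt s)⁻¹) (Ioc 0 t') :=
        (sqrtinv_integrableOn ht'.1).const_mul (m * v)
      apply Integrable.mono' hg
      · exact (((Real.continuous_sqrt.measurable.inv).mul
          ((omega_measurable m).comp hu_cont.measurable))).aestronglyMeasurable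
      · refine (ae_restrict_iff' measurableSet_Ioc).2 (Filter.Eventually.of_forall ?_)
        intro s hsIoc
        have hsIcc : s ∈ Icc (0:ℝ) T := ⟨hsIoc.1.le, hsIoc.2.trans ht'.2⟩
        have h0 : 0 ≤ (Real.sqrt s)⁻¹ * omega m (u s) :=
          mul_nonneg (by positivity) (omega_nonneg _ _)
        rw [Real.norm_eq_abs, abs_of_nonneg h0, homega_u s hsIcc]
        have he1 : Real.exp (-(2 * K * Real.sqrt s)) ≤ 1 := by
          apply Real.exp_le_one_iff.2
          have hsq : (0:ℝ) ≤ Real.sqrt s := Real.sqrt_nonneg s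
          nlinarith
        have h1 : u s * (v * Real.exp (-(2 * K * Real.sqrt s))) ≤ m * v := by
          have h2 := hu_le s
          have h3 := (hu_pos s).le
          have h4 := (Real.exp_pos (-(2 * K * Real.sqrt s))).le
          nlinarith [mul_le_mul_of_nonneg_right h2 (mul_nonneg hv0.le h4),
            mul_le_mul_of_nonneg_left he1 (mul_nonneg hm.le hv0.le)]
        calc (Real.sqrt s)⁻¹ * (u s * (v * Real.exp (-(2 * K * Real.sqrt s))))
            ≤ (Real.sqrt s)⁻¹ * (m * v) := by
              apply mul_le_mul_of_nonneg_left h1 (by positivity)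
          _ = m * v * (Real.sqrt s)⁻¹ := by ring
    have hFTC : ∀ t' ∈ Icc (0:ℝ) T,
        (∫ s in (0:ℝ)..t', K * ((Real.sqrt s)⁻¹ * omega m (u s))) = u t' - u 0 := by
      intro t' ht'
      apply intervalIntegral.integral_eq_sub_of_hasDeriv_right_of_le ht'.1
        hu_cont.continuousOn
        (fun x hx => (hu_deriv x ⟨hx.1, lt_of_lt_of_le hx.2 ht'.2⟩).hasDerivWithinAt)
        ((hInt_u0 t' ht').const_mul K)
    have hInty : ∀ t' ∈ Icc (0:ℝ) T,
        IntervalIntegrable (fun s => (Real.sqrt s)⁻¹ * omega m (y s)) volume 0 t' := by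
      intro t' ht'
      rw [intervalIntegrable_iff_integrableOn_Ioc_of_le ht'.1]
      have hg : IntegrableOn (fun s => omega m Y * (Real.sqrt s)⁻¹) (Ioc 0 t') :=
        (sqrtinv_integrableOn ht'.1).const_mul _
      apply Integrable.mono' hg
      · have hsub : Ioc (0:ℝ) t' ⊆ Icc 0 T := fun s hs => ⟨hs.1.le, hs.2.trans ht'.2⟩
        have hy_aem : AEMeasurable y (volume.restrict (Ioc 0 t')) :=
          (hc.mono hsub).aemeasurable measurableSet_Ioc
        exact ((Real.continuous_sqrt.measurable.inv.aemeasurable).mul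
          ((omega_measurable m).comp_aemeasurable hy_aem)).aestronglyMeasurable
      · refine (ae_restrict_iff' measurableSet_Ioc).2 (Filter.Eventually.of_forall ?_)
        intro s hsIoc
        have hsIcc : s ∈ Icc (0:ℝ) T := ⟨hsIoc.1.le, hsIoc.2.trans ht'.2⟩
        have h0 : 0 ≤ (Real.sqrt s)⁻¹ * omega m (y s) :=
          mul_nonneg (by positivity) (omega_nonneg _ _)
        rw [Real.norm_eq_abs, abs_of_nonneg h0]
        have h1 : omega m (y s) ≤ omega m Y := omega_mono hm (hnn s hsIcc) (hY s hsIcc)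
        calc (Real.sqrt s)⁻¹ * omega m (y s) ≤ (Real.sqrt s)⁻¹ * omega m Y :=
              mul_le_mul_of_nonneg_left h1 (by positivity)
          _ = omega m Y * (Real.sqrt s)⁻¹ := mul_comm _ _
    -- main comparison: y < u everywhere on [0,T]
    have hylt : ∀ s ∈ Icc (0:ℝ) T, y s < u s := by
      by_contra hcon
      push_neg at hcon
      obtain ⟨s₀, hs₀, hs₀'⟩ := hcon
      set S : Set ℝ := {s ∈ Icc (0:ℝ) T | u s ≤ y s} with hS
      have hSne : S.Nonempty := ⟨s₀, ⟨hs₀, hs₀'⟩⟩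
      have hScl : IsClosed S := by
        have hSeq : S = Icc 0 T ∩ (fun s => y s - u s) ⁻¹' (Ici 0) := by
          ext x
          simp [hS, Set.mem_sep_iff, sub_nonneg]
        rw [hSeq]
        exact (hc.sub hu_cont.continuousOn).preimage_isClosed_of_isClosed
          isClosed_Icc isClosed_Ici
      have hSbdd : BddBelow S := ⟨0, fun x hx => hx.1.1⟩
      set t₀ := sInf S with ht₀
      have ht₀S : t₀ ∈ S := hScl.csInf_mem hSne hSbdd
      have ht₀Icc : t₀ ∈ Icc (0:ℝ) T := ht₀S.1
      have ht₀pos : 0 < t₀ := by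
        rcases eq_or_lt_of_le ht₀Icc.1 with h | h
        · exfalso
          have h2 := ht₀S.2
          rw [← h] at h2
          linarith [hu_pos 0]
        · exact h
      have hlt : ∀ s ∈ Ioo (0:ℝ) t₀, y s ≤ u s := by
        intro s hsIoo
        by_contra hcon2
        push_neg at hcon2
        have hsS : s ∈ S := ⟨⟨hsIoo.1.le, hsIoo.2.le.trans ht₀Icc.2⟩, hcon2.le⟩
        have := csInf_le hSbdd hsS
        rw [← ht₀] at this
        linarith [hsIoo.2]
      have hae0 : ∀ᵐ (s : ℝ), s ≠ t₀ := by
        rw [MeasureTheory.ae_iff]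
        have hset : {s : ℝ | ¬ s ≠ t₀} = {t₀} := by ext x; simp
        rw [hset]
        exact Real.volume_singleton
      have hcomp : (∫ s in (0:ℝ)..t₀, (Real.sqrt s)⁻¹ * omega m (y s))
          ≤ ∫ s in (0:ℝ)..t₀, (Real.sqrt s)⁻¹ * omega m (u s) := by
        apply intervalIntegral.integral_mono_ae_restrict ht₀Icc.1
          (hInty t₀ ht₀Icc) (hInt_u0 t₀ ht₀Icc)
        filter_upwards [ae_restrict_of_ae hae0, ae_restrict_mem measurableSet_Icc]
          with s hsne hsmem
        have hyu : y s ≤ u s := by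
          rcases eq_or_lt_of_le hsmem.1 with h0' | h0'
          · rw [← h0']
            exact hy00.trans (hu_pos 0).le
          · exact hlt s ⟨h0', lt_of_le_of_ne hsmem.2 hsne⟩
        have h1 : omega m (y s) ≤ omega m (u s) :=
          omega_mono hm (hnn s ⟨hsmem.1, hsmem.2.trans ht₀Icc.2⟩) hyu
        exact mul_le_mul_of_nonneg_left h1 (by positivity)
      have hKint : K * (∫ s in (0:ℝ)..t₀, (Real.sqrt s)⁻¹ * omega m (u s)) = u t₀ - u 0 := by
        rw [← intervalIntegral.integral_const_mul]
        exact hFTC t₀ ht₀Icc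
      have hchain : y t₀ ≤ u t₀ - u 0 := by
        calc y t₀ ≤ K * ∫ s in (0:ℝ)..t₀, (Real.sqrt s)⁻¹ * omega m (y s) :=
              hineq t₀ ht₀Icc
          _ ≤ K * ∫ s in (0:ℝ)..t₀, (Real.sqrt s)⁻¹ * omega m (u s) :=
              mul_le_mul_of_nonneg_left hcomp hK
          _ = u t₀ - u 0 := hKint
      have h2 := ht₀S.2
      linarith [hu_pos 0]
    -- conclude from y t < u t
    have hyt := hylt t ht
    have hmono2 : Real.exp (-(v * Real.exp (-(2 * K * Real.sqrt t)))) ≤ Real.exp (-(v * c₁)) := by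
      apply Real.exp_le_exp.2
      have hsq : Real.sqrt t ≤ Real.sqrt T := Real.sqrt_le_sqrt ht.2
      have h1 : c₁ ≤ Real.exp (-(2 * K * Real.sqrt t)) := by
        apply Real.exp_le_exp.2
        nlinarith
      nlinarith [hv0.le]
    calc y t ≤ u t := hyt.le
      _ = m * Real.exp (-(v * Real.exp (-(2 * K * Real.sqrt t)))) := rfl
      _ ≤ m * Real.exp (-(v * c₁)) := mul_le_mul_of_nonneg_left hmono2 hm.le
  have htend : Filter.Tendsto (fun v : ℝ => m * Real.exp (-(v * c₁)))
      Filter.atTop (nhds 0) := by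
    have h1 : Filter.Tendsto (fun v : ℝ => v * c₁) Filter.atTop Filter.atTop :=
      Filter.Tendsto.atTop_mul_const hc₁0 Filter.tendsto_id
    have h2 : Filter.Tendsto (fun v : ℝ => -(v * c₁)) Filter.atTop Filter.atBot :=
      Filter.tendsto_neg_atBot_iff.2 h1
    have h3 := Real.tendsto_exp_atBot.comp h2
    have h4 := h3.const_mul m
    simpa using h4
  exact ge_of_tendsto htend (Filter.eventually_atTop.2 ⟨_, key⟩)

end
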